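/- Let ψ = (ψ_j)_{j≥1} be an orthonormal basis of H and set c_j = ⟨X − μ, ψ_j⟩ for j ≥ 1. Then for every j ≥ 1, the law of c_j on ℝ is the finite mixture of Gaussian measures Σ_{k=1}^K p_k · N(m_kj, τ_kj²), where m_kj = ⟨μ_k − μ, ψ_j⟩ and τ_kj² = Σ_{l≥1} ⟨φ_l, ψ_j⟩² σ_{kl}²; that is, the pushforward measure of P under c_j equals the measure Σ_{k=1}^K p_k · gaussian(m_kj, τ_kj²). -/

import Mathlib

open MeasureTheory ProbabilityTheory Filter Real
open scoped ENNReal NNReal RealInnerProductSpace Topology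

lemma exp_quad_key (a b z x : ℝ) (ha : 0 < a) (hb : 0 < b) :
    (- x^2 / (2*a)) + (- (z - x)^2 / (2*b)) =
      -((a+b)/(2*a*b)) * (x - a*z/(a+b))^2 + (- z^2 / (2*(a+b))) := by
  have hs : a + b ≠ 0 := by positivity
  field_simp
  ring

lemma gaussian_conv_pdf (v1 v2 : ℝ≥0) (hv1 : v1 ≠ 0) (hv2 : v2 ≠ 0) (z : ℝ) :
    ∫ x, gaussianPDFReal 0 v1 x * gaussianPDFReal 0 v2 (z - x) =
      gaussianPDFReal 0 (v1 + v2) z := by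
  have ha : (0:ℝ) < v1 := lt_of_le_of_ne (v1.coe_nonneg) (by exact_mod_cast (Ne.symm hv1))
  have hb : (0:ℝ) < v2 := lt_of_le_of_ne (v2.coe_nonneg) (by exact_mod_cast (Ne.symm hv2))
  set a : ℝ := (v1:ℝ) with hadef
  set b : ℝ := (v2:ℝ) with hbdef
  have hs : (0:ℝ) < a + b := by positivity
  have hk : (0:ℝ) < (a+b)/(2*a*b) := by positivity
  simp only [gaussianPDFReal, sub_zero, NNReal.coe_add]
  have h1 : ∀ x : ℝ, (√(2 * π * a))⁻¹ * rexp (- x^2 / (2*a)) *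
      ((√(2 * π * b))⁻¹ * rexp (- (z-x)^2 / (2*b))) =
      ((√(2 * π * a))⁻¹ * (√(2 * π * b))⁻¹ * rexp (- z^2 / (2*(a+b)))) *
        rexp (-((a+b)/(2*a*b)) * (x - a*z/(a+b))^2) := by
    intro x
    rw [mul_mul_mul_comm, ← Real.exp_add, exp_quad_key a b z x ha hb, Real.exp_add]
    ring
  rw [show (fun x => (√(2 * π * ↑v1))⁻¹ * rexp (-x ^ 2 / (2 * ↑v1)) *
      ((√(2 * π * ↑v2))⁻¹ * rexp (-(z - x) ^ 2 / (2 * ↑v2)))) = fun x =>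
      ((√(2 * π * a))⁻¹ * (√(2 * π * b))⁻¹ * rexp (- z^2 / (2*(a+b)))) *
        rexp (-((a+b)/(2*a*b)) * (x - a*z/(a+b))^2) from funext h1]
  rw [integral_const_mul]
  rw [integral_sub_right_eq_self (fun x => rexp (-((a+b)/(2*a*b)) * x^2)) (a*z/(a+b))]
  rw [integral_gaussian]
  rw [show π / ((a+b)/(2*a*b)) = (2*π*a) * (2*π*b) / (2*π*(a+b)) by field_simp]
  have h2a : (0:ℝ) < 2*π*a := by positivity
  have h2b : (0:ℝ) < 2*π*b := by positivity
  have h2s : (0:ℝ) < 2*π*(a+b) := by positivity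
  rw [Real.sqrt_div (by positivity : (0:ℝ) ≤ 2*π*a*(2*π*b)), Real.sqrt_mul h2a.le]
  have e1 : √(2*π*a) ≠ 0 := by positivity
  have e2 : √(2*π*b) ≠ 0 := by positivity
  have e3 : √(2*π*(a+b)) ≠ 0 := by positivity
  field_simp
  simp only [hadef, hbdef]
  ring

lemma integrable_gaussianPDFReal_mul (v1 v2 : ℝ≥0) (z : ℝ) :
    Integrable (fun x => gaussianPDFReal 0 v1 x * gaussianPDFReal 0 v2 (z - x)) := by
  have h : Integrable (fun x => gaussianPDFReal 0 v2 (z - x) * gaussianPDFReal 0 v1 x) := by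
    refine Integrable.bdd_mul (c := (√(2 * π * v2))⁻¹) (integrable_gaussianPDFReal 0 v1)
      (((measurable_gaussianPDFReal 0 v2).comp (measurable_const.sub measurable_id)).aestronglyMeasurable)
      (ae_of_all _ fun x => ?_)
    rw [Real.norm_of_nonneg (gaussianPDFReal_nonneg _ _ _), gaussianPDFReal]
    nth_rewrite 2 [← mul_one (√(2 * π * (v2:ℝ)))⁻¹]
    gcongr
    exact Real.exp_le_one_iff.2 (by
        apply div_nonpos_of_nonpos_of_nonneg
        · simp [sq_nonneg]
        · positivity)
  simpa [mul_comm] using h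

lemma gaussianPDF_conv (v1 v2 : ℝ≥0) (hv1 : v1 ≠ 0) (hv2 : v2 ≠ 0) (z : ℝ) :
    ∫⁻ x, gaussianPDF 0 v1 x * gaussianPDF 0 v2 (z - x) =
      gaussianPDF 0 (v1 + v2) z := by
  simp only [gaussianPDF]
  simp_rw [← ENNReal.ofReal_mul (gaussianPDFReal_nonneg 0 v1 _)]
  rw [← ofReal_integral_eq_lintegral_ofReal (integrable_gaussianPDFReal_mul v1 v2 z)
      (ae_of_all _ fun x => mul_nonneg (gaussianPDFReal_nonneg _ _ _) (gaussianPDFReal_nonneg _ _ _)),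
    gaussian_conv_pdf v1 v2 hv1 hv2 z]


lemma gaussian_map_add_prod (v1 v2 : ℝ≥0) :
    Measure.map (fun p : ℝ × ℝ => p.1 + p.2) ((gaussianReal 0 v1).prod (gaussianReal 0 v2)) =
      gaussianReal 0 (v1 + v2) := by
  by_cases hv1 : v1 = 0
  · subst hv1
    rw [gaussianReal_zero_var, Measure.dirac_prod, Measure.map_map measurable_add measurable_prodMk_left]
    simp [Function.comp_def, zero_add]
  by_cases hv2 : v2 = 0
  · subst hv2
    rw [gaussianReal_zero_var, Measure.prod_dirac, Measure.map_map measurable_add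
      (measurable_prodMk_right (m := borel ℝ))]
    simp [Function.comp_def, add_zero]
  have hv12 : v1 + v2 ≠ 0 := by simp [hv1, hv2]
  rw [gaussianReal_of_var_ne_zero 0 hv1, gaussianReal_of_var_ne_zero 0 hv2,
    gaussianReal_of_var_ne_zero 0 hv12]
  ext s hs
  rw [Measure.map_apply measurable_add hs, withDensity_apply _ hs]
  rw [Measure.prod_apply (measurable_add hs)]
  have hind : ∀ x y : ℝ, ((fun p : ℝ × ℝ => p.1 + p.2) ⁻¹' s).indicator
      (fun _ => (1:ℝ≥0∞)) (x, y) = s.indicator (fun _ => (1:ℝ≥0∞)) (x + y) := by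
    intro x y
    by_cases h : x + y ∈ s <;> simp [Set.indicator, h, Set.mem_preimage]
  calc ∫⁻ x, (volume.withDensity (gaussianPDF 0 v2)) (Prod.mk x ⁻¹' ((fun p : ℝ × ℝ => p.1 + p.2) ⁻¹' s)) ∂(volume.withDensity (gaussianPDF 0 v1))
      = ∫⁻ x, ∫⁻ y, s.indicator (fun _ => (1:ℝ≥0∞)) (x + y) * gaussianPDF 0 v2 y ∂volume ∂(volume.withDensity (gaussianPDF 0 v1)) := by
        congr 1
        ext x
        rw [withDensity_apply _ (measurable_prodMk_left (measurable_add hs))]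
        rw [← lintegral_indicator (measurable_prodMk_left (measurable_add hs)) (gaussianPDF 0 v2)]
        congr 1
        ext y
        by_cases h : x + y ∈ s <;> simp [Set.indicator, h, Set.mem_preimage]
    _ = ∫⁻ x, ∫⁻ z, s.indicator (fun _ => (1:ℝ≥0∞)) z * gaussianPDF 0 v2 (z - x) ∂volume ∂(volume.withDensity (gaussianPDF 0 v1)) := by
        congr 1
        ext x
        rw [← lintegral_add_left_eq_self (fun z => s.indicator (fun _ => (1:ℝ≥0∞)) z * gaussianPDF 0 v2 (z - x)) x]
        simp
    _ = ∫⁻ x, gaussianPDF 0 v1 x * ∫⁻ z, s.indicator (fun _ => (1:ℝ≥0∞)) z * gaussianPDF 0 v2 (z - x) ∂volume ∂volume := by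
        rw [lintegral_withDensity_eq_lintegral_mul _ (measurable_gaussianPDF 0 v1)]
        · rfl
        · exact Measurable.lintegral_prod_right'
            (f := fun p : ℝ × ℝ => s.indicator (fun _ => (1:ℝ≥0∞)) p.2 * gaussianPDF 0 v2 (p.2 - p.1))
            ((((measurable_indicator_const_iff 1).2 hs).comp measurable_snd).mul
              ((measurable_gaussianPDF 0 v2).comp (measurable_snd.sub measurable_fst)))
    _ = ∫⁻ x, ∫⁻ z, gaussianPDF 0 v1 x * (s.indicator (fun _ => (1:ℝ≥0∞)) z * gaussianPDF 0 v2 (z - x)) ∂volume ∂volume := by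
        congr 1
        ext x
        rw [eq_comm]
        exact lintegral_const_mul' _ _ ENNReal.ofReal_ne_top
    _ = ∫⁻ z, ∫⁻ x, gaussianPDF 0 v1 x * (s.indicator (fun _ => (1:ℝ≥0∞)) z * gaussianPDF 0 v2 (z - x)) ∂volume ∂volume := by
        refine lintegral_lintegral_swap ?_
        exact (((measurable_gaussianPDF 0 v1).comp measurable_fst).mul
          ((((measurable_indicator_const_iff 1).2 hs).comp measurable_snd).mul
            ((measurable_gaussianPDF 0 v2).comp (measurable_snd.sub measurable_fst)))).aemeasurable
    _ = ∫⁻ z, s.indicator (fun _ => (1:ℝ≥0∞)) z * gaussianPDF 0 (v1 + v2) z ∂volume := by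
        congr 1
        ext z
        simp_rw [mul_left_comm (gaussianPDF 0 v1 _)]
        rw [lintegral_const_mul' _ _ (by by_cases h : z ∈ s <;> simp [Set.indicator, h]),
          gaussianPDF_conv v1 v2 hv1 hv2 z]
    _ = ∫⁻ z in s, gaussianPDF 0 (v1 + v2) z ∂volume := by
        rw [← lintegral_indicator hs (gaussianPDF 0 (v1+v2))]
        congr 1
        ext z
        by_cases h : z ∈ s <;> simp [Set.indicator, h]

lemma indep_gaussian_add {Ω : Type*} [MeasurableSpace Ω] (Q : Measure Ω) [IsProbabilityMeasure Q]
    {X Y : Ω → ℝ} (hX : Measurable X) (hY : Measurable Y) (h : IndepFun X Y Q)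
    {v1 v2 : ℝ≥0} (hXg : Measure.map X Q = gaussianReal 0 v1)
    (hYg : Measure.map Y Q = gaussianReal 0 v2) :
    Measure.map (X + Y) Q = gaussianReal 0 (v1 + v2) := by
  have hprod : Measure.map (fun ω => (X ω, Y ω)) Q = (gaussianReal 0 v1).prod (gaussianReal 0 v2) := by
    rw [← hXg, ← hYg]
    exact (indepFun_iff_map_prod_eq_prod_map_map hX.aemeasurable hY.aemeasurable).1 h
  have : (X + Y) = (fun p : ℝ × ℝ => p.1 + p.2) ∘ (fun ω => (X ω, Y ω)) := rfl
  rw [this, ← Measure.map_map measurable_add (hX.prodMk hY), hprod, gaussian_map_add_prod]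

lemma indep_gaussian_sum {Ω : Type*} [MeasurableSpace Ω] (Q : Measure Ω) [IsProbabilityMeasure Q]
    (η : ℕ → Ω → ℝ) (hmeas : ∀ l, Measurable (η l))
    (hindep : iIndepFun η Q)
    (t : ℕ → ℝ≥0) (hg : ∀ l, Measure.map (η l) Q = gaussianReal 0 (t l)) (n : ℕ) :
    Measure.map (fun ω => ∑ l ∈ Finset.range n, η l ω) Q =
      gaussianReal 0 (∑ l ∈ Finset.range n, t l) := by
  induction n with
  | zero =>
    simp only [Finset.range_zero, Finset.sum_empty]
    rw [show (fun _ : Ω => (0:ℝ)) = fun _ => (0:ℝ) from rfl]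
    rw [Measure.map_const, gaussianReal_zero_var]
    simp
  | succ n ih =>
    have hsum : (fun ω => ∑ l ∈ Finset.range (n+1), η l ω) =
        (∑ l ∈ Finset.range n, η l) + η n := by
      ext ω
      simp [Finset.sum_range_succ, Finset.sum_apply]
    rw [hsum, Finset.sum_range_succ]
    refine indep_gaussian_add Q (by measurability) (hmeas n) ?_ ?_ (hg n)
    · exact hindep.indepFun_finsetSum_of_notMem hmeas (by simp)
    · have : (∑ l ∈ Finset.range n, η l) = fun ω => ∑ l ∈ Finset.range n, η l ω := by
        ext ω; simp [Finset.sum_apply]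
      rw [this, ih]

lemma gaussianReal_eq_map (m : ℝ) (w : ℝ≥0) :
    gaussianReal m w = Measure.map (fun x => m + √(w:ℝ) * x) (gaussianReal 0 1) := by
  have h1 : (gaussianReal 0 1).map (√(w:ℝ) * ·) = gaussianReal 0 w := by
    rw [gaussianReal_map_const_mul (√(w:ℝ))]
    congr 1
    · ring
    · ext
      simp [Real.sq_sqrt w.coe_nonneg]
  have h2 : (gaussianReal 0 w).map (m + ·) = gaussianReal m w := by
    rw [gaussianReal_map_const_add m]; simp
  rw [← h2, ← h1, Measure.map_map (by fun_prop) (by fun_prop)]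
  rfl

lemma gaussian_limit {Ω : Type*} [MeasurableSpace Ω] (Q : Measure Ω) [IsProbabilityMeasure Q]
    (f : ℕ → Ω → ℝ) (g : Ω → ℝ) (hf : ∀ n, Measurable (f n)) (hg : Measurable g)
    (hconv : ∀ᵐ ω ∂Q, Tendsto (fun n => f n ω) atTop (𝓝 (g ω)))
    (m : ℝ) (v : ℕ → ℝ≥0) (vL : ℝ≥0) (hv : Tendsto v atTop (𝓝 vL))
    (hfg : ∀ n, Measure.map (f n) Q = gaussianReal m (v n)) :
    Measure.map g Q = gaussianReal m vL := by
  have hmapP : IsProbabilityMeasure (Measure.map g Q) := Measure.isProbabilityMeasure_map hg.aemeasurable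
  refine ext_of_forall_lintegral_eq_of_IsFiniteMeasure (fun F => ?_)
  have hFmeas : Measurable (fun x => (F x : ℝ≥0∞)) :=
    measurable_coe_nnreal_ennreal.comp F.continuous.measurable
  set C : ℝ≥0 := nndist F 0 with hC
  have hbd : ∀ x, (F x : ℝ≥0∞) ≤ (C : ℝ≥0∞) := by
    intro x
    have h1 : nndist (F x) ((0 : BoundedContinuousFunction ℝ ℝ≥0) x) ≤ nndist F 0 :=
      BoundedContinuousFunction.nndist_coe_le_nndist x
    have h2 : nndist (F x) ((0 : BoundedContinuousFunction ℝ ℝ≥0) x) = F x := by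
      simp [NNReal.nndist_zero_eq_val']
    exact_mod_cast ENNReal.coe_le_coe.2 (h2 ▸ h1)
  -- A : lintegral over map g Q is limit of lintegrals over map (f n) Q
  have hA : Tendsto (fun n => ∫⁻ ω, F (f n ω) ∂Q) atTop (𝓝 (∫⁻ ω, F (g ω) ∂Q)) := by
    refine tendsto_lintegral_of_dominated_convergence (fun _ => (C : ℝ≥0∞))
      (fun n => hFmeas.comp (hf n)) (fun n => ae_of_all _ fun ω => hbd _) ?_ ?_
    · simp [lintegral_const]
    · filter_upwards [hconv] with ω hω
      exact (ENNReal.continuous_coe.tendsto _).comp ((F.continuous.tendsto _).comp hω)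
  -- B : lintegral against gaussianReal m (v n) tends to that against gaussianReal m vL
  have hsqrt : Tendsto (fun n => √((v n : ℝ))) atTop (𝓝 (√(vL:ℝ))) :=
    (Real.continuous_sqrt.tendsto _).comp ((NNReal.continuous_coe.tendsto _).comp hv)
  have hBrep : ∀ w : ℝ≥0, ∫⁻ x, F x ∂(gaussianReal m w) =
      ∫⁻ x, F (m + √(w:ℝ) * x) ∂(gaussianReal 0 1) := by
    intro w
    rw [gaussianReal_eq_map m w, lintegral_map hFmeas (by fun_prop)]
  have hB : Tendsto (fun n => ∫⁻ x, F x ∂(gaussianReal m (v n))) atTop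
      (𝓝 (∫⁻ x, F x ∂(gaussianReal m vL))) := by
    simp_rw [hBrep]
    refine tendsto_lintegral_of_dominated_convergence (fun _ => (C : ℝ≥0∞))
      (fun n => hFmeas.comp (by fun_prop)) (fun n => ae_of_all _ fun x => hbd _) ?_ ?_
    · simp [lintegral_const]
    · refine ae_of_all _ fun x => ?_
      refine (ENNReal.continuous_coe.tendsto _).comp ((F.continuous.tendsto _).comp ?_)
      exact tendsto_const_nhds.add (hsqrt.mul tendsto_const_nhds)
  have heq : ∀ n, ∫⁻ ω, F (f n ω) ∂Q = ∫⁻ x, F x ∂(gaussianReal m (v n)) := by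
    intro n
    rw [← hfg n, lintegral_map hFmeas (hf n)]
  simp_rw [heq] at hA
  rw [lintegral_map hFmeas hg]
  exact tendsto_nhds_unique hA hB

/-- Step C : the conditional law. -/
lemma conditional_law
    {H : Type*} [NormedAddCommGroup H] [InnerProductSpace ℝ H] [CompleteSpace H]
    [SecondCountableTopology H] [MeasurableSpace H] [BorelSpace H]
    {Ω : Type*} [MeasurableSpace Ω] (Q : Measure Ω) [IsProbabilityMeasure Q]
    (μs μ : H) (φ : ℕ → H) (hφon : Orthonormal ℝ φ)
    (ξ : ℕ → Ω → ℝ) (hξmeas : ∀ j, Measurable (ξ j))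
    (σ2 : ℕ → ℝ≥0) (hσ2 : Summable σ2)
    (hindep : iIndepFun ξ Q)
    (hgauss : ∀ j, Measure.map (ξ j) Q = gaussianReal 0 (σ2 j))
    (X : Ω → H) (hXmeas : Measurable X)
    (hXdec : ∀ᵐ ω ∂Q, HasSum (fun l => ξ l ω • φ l) (X ω - μs))
    (ψj : H) (hψj : ‖ψj‖ = 1) :
    Measure.map (fun ω => ⟪X ω - μ, ψj⟫) Q =
      gaussianReal ⟪μs - μ, ψj⟫ (∑' l, ‖⟪φ l, ψj⟫‖₊ ^ 2 * σ2 l) := by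
  set c : ℕ → ℝ := fun l => ⟪φ l, ψj⟫ with hc
  set η : ℕ → Ω → ℝ := fun l ω => c l * ξ l ω with hη
  set t : ℕ → ℝ≥0 := fun l => ‖c l‖₊ ^ 2 * σ2 l with ht
  have hηmeas : ∀ l, Measurable (η l) := fun l => (hξmeas l).const_mul _
  have hηindep : iIndepFun η Q := by
    exact hindep.comp (fun l => (c l * ·)) (fun l => measurable_const_mul _)
  have hηg : ∀ l, Measure.map (η l) Q = gaussianReal 0 (t l) := by
    intro l
    have : η l = (c l * ·) ∘ ξ l := rfl
    rw [this, ← Measure.map_map (measurable_const_mul _) (hξmeas l), hgauss l,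
      gaussianReal_map_const_mul]
    congr 1
    · ring
    · ext
      simp [ht, sq_abs]
  set m : ℝ := ⟪μs - μ, ψj⟫ with hm
  set f : ℕ → Ω → ℝ := fun n ω => m + ∑ l ∈ Finset.range n, η l ω with hf
  have hfmeas : ∀ n, Measurable (f n) := by
    intro n
    exact measurable_const.add (Finset.measurable_sum _ fun l _ => hηmeas l)
  have hfg : ∀ n, Measure.map (f n) Q = gaussianReal m (∑ l ∈ Finset.range n, t l) := by
    intro n
    have : f n = (m + ·) ∘ fun ω => ∑ l ∈ Finset.range n, η l ω := rfl
    rw [this, ← Measure.map_map (measurable_const_add m) (by fun_prop),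
      indep_gaussian_sum Q η hηmeas hηindep t hηg n, gaussianReal_map_const_add]
    simp
  -- summability of t
  have htle : ∀ l, t l ≤ σ2 l := by
    intro l
    have h1 : |c l| ≤ 1 := by
      calc |c l| ≤ ‖φ l‖ * ‖ψj‖ := abs_real_inner_le_norm _ _
        _ = 1 := by rw [hφon.1 l, hψj, one_mul]
    have h2 : ‖c l‖₊ ≤ 1 := by
      rw [← NNReal.coe_le_coe]
      simpa [Real.norm_eq_abs] using h1
    calc t l = ‖c l‖₊ ^ 2 * σ2 l := rfl
      _ ≤ 1 ^ 2 * σ2 l := by gcongr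
      _ = σ2 l := by simp
  have htsum : Summable t := NNReal.summable_of_le htle hσ2
  have hvlim : Tendsto (fun n => ∑ l ∈ Finset.range n, t l) atTop (𝓝 (∑' l, t l)) :=
    htsum.hasSum.tendsto_sum_nat
  -- a.e. convergence
  have hconv : ∀ᵐ ω ∂Q, Tendsto (fun n => f n ω) atTop (𝓝 ⟪X ω - μ, ψj⟫) := by
    filter_upwards [hXdec] with ω hω
    have h1 : HasSum (fun l => η l ω) ⟪X ω - μs, ψj⟫ := by
      have h2 := hω.mapL (innerSL ℝ ψj)
      simp only [innerSL_apply_apply, real_inner_smul_right] at h2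
      simpa [hη, hc, real_inner_comm, mul_comm] using h2
    have h3 := h1.tendsto_sum_nat
    have h4 : Tendsto (fun n => f n ω) atTop (𝓝 (m + ⟪X ω - μs, ψj⟫)) :=
      tendsto_const_nhds.add h3
    have h5 : m + ⟪X ω - μs, ψj⟫ = ⟪X ω - μ, ψj⟫ := by
      rw [hm, ← inner_add_left]
      congr 1
      abel
    rwa [h5] at h4
  exact gaussian_limit Q f _ hfmeas
    ((hXmeas.sub measurable_const).inner measurable_const) hconv m _ _ hvlim hfg

/-- The law of `c_j` is the finite Gaussian mixture `∑ k, p_k • N(m_kj, τ_kj²)`. -/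
theorem stmt_6
{H : Type*} [NormedAddCommGroup H] [InnerProductSpace ℝ H] [CompleteSpace H]
    [SecondCountableTopology H] [MeasurableSpace H] [BorelSpace H]
    {Ω : Type*} [MeasurableSpace Ω] (P : Measure Ω) [IsProbabilityMeasure P]
    (K : ℕ) (hK : 1 ≤ K) (Z : Ω → Fin K) (hZ : Measurable Z)
    (p : Fin K → ℝ) (hp : ∀ k, 0 < p k) (hpsum : ∑ k, p k = 1)
    (hpP : ∀ k, P (Z ⁻¹' {k}) = ENNReal.ofReal (p k))
    (μs : Fin K → H)
    (φ : ℕ → H) (hφon : Orthonormal ℝ φ)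
    (hφtot : (Submodule.span ℝ (Set.range φ)).topologicalClosure = ⊤)
    (ξ : ℕ → Ω → ℝ) (hξmeas : ∀ j, Measurable (ξ j))
    (σ2 : Fin K → ℕ → ℝ≥0)
    (hσ2 : Summable fun kj : Fin K × ℕ => (σ2 kj.1 kj.2 : ℝ))
    (hindep : ∀ k, iIndepFun ξ (P[|Z ⁻¹' {k}]))
    (hgauss : ∀ k j, Measure.map (ξ j) (P[|Z ⁻¹' {k}]) = gaussianReal 0 (σ2 k j))
    (X : Ω → H) (hXmeas : Measurable X)
    (hXdec : ∀ᵐ ω ∂P, HasSum (fun j => ξ j ω • φ j) (X ω - μs (Z ω)))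
    (μ : H) (hμ : μ = ∑ k, p k • μs k)
(ψ : ℕ → H) (hψon : Orthonormal ℝ ψ)
    (hψtot : (Submodule.span ℝ (Set.range ψ)).topologicalClosure = ⊤) :
    ∀ j : ℕ,
      Measure.map (fun ω => ⟪X ω - μ, ψ j⟫) P =
        ∑ k, ENNReal.ofReal (p k) •
          gaussianReal ⟪μs k - μ, ψ j⟫ (∑' l, ‖⟪φ l, ψ j⟫‖₊ ^ 2 * σ2 k l) := by
  intro j
  set g : Ω → ℝ := fun ω => ⟪X ω - μ, ψ j⟫ with hg
  have hgmeas : Measurable g := (hXmeas.sub measurable_const).inner measurable_const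
  have hsmeas : ∀ k, MeasurableSet (Z ⁻¹' {k}) := fun k => hZ (measurableSet_singleton k)
  have hsne : ∀ k, P (Z ⁻¹' {k}) ≠ 0 := by
    intro k
    rw [hpP k]
    simpa using (ENNReal.ofReal_pos.2 (hp k)).ne'
  have hQ : ∀ k, IsProbabilityMeasure (P[|Z ⁻¹' {k}]) := fun k =>
    cond_isProbabilityMeasure (hsne k)
  -- the per-class law
  have hlaw : ∀ k, Measure.map g (P[|Z ⁻¹' {k}]) =
      gaussianReal ⟪μs k - μ, ψ j⟫ (∑' l, ‖⟪φ l, ψ j⟫‖₊ ^ 2 * σ2 k l) := by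
    intro k
    haveI := hQ k
    have hac : P[|Z ⁻¹' {k}] ≪ P := cond_absolutelyContinuous
    have hZk : ∀ᵐ ω ∂(P[|Z ⁻¹' {k}]), Z ω = k := by
      rw [ae_iff]
      have : {ω | ¬ Z ω = k} = (Z ⁻¹' {k})ᶜ := by
        ext ω; simp
      rw [this, cond_apply (hsmeas k)]
      simp
    have hXdecQ : ∀ᵐ ω ∂(P[|Z ⁻¹' {k}]), HasSum (fun l => ξ l ω • φ l) (X ω - μs k) := by
      filter_upwards [hac.ae_le hXdec, hZk] with ω h1 h2
      rwa [h2] at h1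
    have hσ2k : Summable (fun l => σ2 k l) := by
      rw [← NNReal.summable_coe]
      exact hσ2.comp_injective (fun a b hab => by simpa using congrArg Prod.snd hab :
        Function.Injective fun l : ℕ => ((k, l) : Fin K × ℕ))
    exact conditional_law (P[|Z ⁻¹' {k}]) (μs k) μ φ hφon ξ hξmeas (σ2 k) hσ2k
      (hindep k) (hgauss k) X hXmeas hXdecQ (ψ j) (hψon.1 j)
  -- decomposition of P
  ext A hA
  rw [Measure.map_apply hgmeas hA, Measure.finset_sum_apply]
  have hPA : P (g ⁻¹' A) = ∑ k, P (Z ⁻¹' {k} ∩ g ⁻¹' A) := by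
    have hU : g ⁻¹' A = ⋃ k ∈ (Finset.univ : Finset (Fin K)), (Z ⁻¹' {k} ∩ g ⁻¹' A) := by
      ext ω
      simp only [Set.mem_iUnion, Set.mem_inter_iff, Set.mem_preimage, Set.mem_singleton_iff,
        Finset.mem_univ, Set.mem_setOf_eq, exists_prop, true_and]
      exact ⟨fun h => ⟨Z ω, rfl, h⟩, fun ⟨k, _, h⟩ => h⟩
    conv_lhs => rw [hU]
    rw [measure_biUnion_finset ?_ (fun k _ => (hsmeas k).inter (hgmeas hA))]
    intro k _ k' _ hkk'
    refine Set.disjoint_left.2 fun ω h1 h2 => hkk' ?_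
    rw [← h1.1, ← h2.1]
  rw [hPA]
  refine Finset.sum_congr rfl fun k _ => ?_
  rw [Measure.smul_apply, ← hlaw k, Measure.map_apply hgmeas hA, smul_eq_mul,
    cond_apply (hsmeas k), ← mul_assoc, hpP k, ENNReal.mul_inv_cancel
      (by rw [← hpP k]; exact hsne k) ENNReal.ofReal_ne_top, one_mul]
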